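/- Let π_l be a root of the Artin–Hasse series with v_p(π_l) = 1/(p^l - p^{l-1}) and let θ_l(X) = E(π_l X) = Σ_{n≥0} λ_{n,l} X^n, where E is the Artin–Hasse exponential. Then v_p(λ_{n,l}) ≥ n/(p^l - p^{l-1}) for all n ≥ 0, and λ_{n,l} = π_l^n/n! for 0 ≤ n ≤ p-1. In particular θ_l converges on the open disk of radius p^{1/(p^l - p^{l-1})} in ℂ_p. -/

import Mathlib

open PowerSeries

/-- The Artin–Hasse logarithm `AH(X) = ∑_{i≥0} X^{p^i}/p^i` as a formal power series. -/
noncomputable def artinHasseLog (p : ℕ) [Fact p.Prime] : PowerSeries ℚ_[p] :=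
  PowerSeries.mk fun n =>
    if p ^ (Nat.log p n) = n ∧ n ≠ 0 then ((p : ℚ_[p]) ^ (Nat.log p n))⁻¹ else 0

namespace Stmt9Aux
open Finset
variable (p : ℕ) [Fact p.Prime]

/-- `AH'(X) = ∑_i X^{p^i - 1}`. -/
noncomputable def AHD : PowerSeries ℚ_[p] :=
  PowerSeries.mk fun i => if p ^ Nat.log p (i + 1) = i + 1 then 1 else 0

lemma one_lt : 1 < p := (Fact.out : p.Prime).one_lt

lemma deriv_AH : derivative ℚ_[p] (artinHasseLog p) = AHD p := by
  ext i
  rw [coeff_derivative, artinHasseLog, AHD, coeff_mk, coeff_mk]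
  by_cases h : p ^ Nat.log p (i + 1) = i + 1
  · rw [if_pos ⟨h, i.succ_ne_zero⟩, if_pos h]
    have : ((i : ℚ_[p]) + 1) = (p : ℚ_[p]) ^ Nat.log p (i + 1) := by
      rw [← Nat.cast_pow, h]; push_cast; ring
    rw [this, inv_mul_cancel₀ (pow_ne_zero _ (Nat.cast_ne_zero.2 (by have := one_lt p; omega)))]
  · rw [if_neg (fun hc => h hc.1), if_neg h, zero_mul]

lemma sum_AHD (g : ℕ → ℚ_[p]) (N : ℕ) :
    ∑ ij ∈ Finset.HasAntidiagonal.antidiagonal N, (PowerSeries.coeff (R := ℚ_[p]) ij.1 (AHD p)) * g ij.2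
      = ∑ k ∈ Finset.range (N + 1), if p ^ k ≤ N + 1 then g (N + 1 - p ^ k) else 0 := by
  rw [Finset.Nat.sum_antidiagonal_eq_sum_range_succ
    (f := fun i j => PowerSeries.coeff (R := ℚ_[p]) i (AHD p) * g j)]
  have step : ∀ i ∈ Finset.range (N + 1),
      PowerSeries.coeff (R := ℚ_[p]) i (AHD p) * g (N - i)
        = if p ^ Nat.log p (i + 1) = i + 1 then g (N - i) else 0 := by
    intro i _
    rw [AHD, coeff_mk, ite_mul, one_mul, zero_mul]
  rw [Finset.sum_congr rfl step, ← Finset.sum_filter, ← Finset.sum_filter]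
  refine Finset.sum_nbij' (fun i => Nat.log p (i + 1)) (fun k => p ^ k - 1) ?_ ?_ ?_ ?_ ?_
  · intro i hi
    simp only [mem_filter, mem_range] at hi ⊢
    obtain ⟨hiN, hc⟩ := hi
    constructor
    · calc Nat.log p (i + 1) < i + 1 := Nat.log_lt_self p (by omega)
        _ ≤ N + 1 := by omega
    · rw [hc]; omega
  · intro k hk
    simp only [mem_filter, mem_range] at hk ⊢
    obtain ⟨hkN, hc⟩ := hk
    have h1 : 1 ≤ p ^ k := Nat.one_le_pow _ _ (by have := one_lt p; omega)
    constructor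
    · omega
    · rw [Nat.sub_add_cancel h1, Nat.log_pow (one_lt p)]
  · intro i hi
    simp only [mem_filter, mem_range] at hi
    show p ^ Nat.log p (i + 1) - 1 = i
    rw [hi.2]; omega
  · intro k hk
    simp only [mem_filter, mem_range] at hk
    have h1 : 1 ≤ p ^ k := Nat.one_le_pow _ _ (by have := one_lt p; omega)
    show Nat.log p (p ^ k - 1 + 1) = k
    rw [Nat.sub_add_cancel h1, Nat.log_pow (one_lt p)]
  · intro i hi
    simp only [mem_filter, mem_range] at hi
    rw [hi.2]
    congr 1
    omega


variable {p}

lemma recursion {E : PowerSeries ℚ_[p]}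
    (hE : derivative ℚ_[p] E = derivative ℚ_[p] (artinHasseLog p) * E) (n : ℕ) :
    ((n : ℚ_[p]) + 1) * PowerSeries.coeff (R := ℚ_[p]) (n + 1) E
      = ∑ k ∈ Finset.range (n + 1),
          if p ^ k ≤ n + 1 then PowerSeries.coeff (R := ℚ_[p]) (n + 1 - p ^ k) E else 0 := by
  have h := congrArg (PowerSeries.coeff (R := ℚ_[p]) n) hE
  rw [deriv_AH, coeff_derivative, coeff_mul] at h
  rw [sum_AHD p (fun j => PowerSeries.coeff (R := ℚ_[p]) j E) n] at h
  rw [mul_comm, ← h]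

lemma ode_unique {u F G : PowerSeries ℚ_[p]}
    (hF : derivative ℚ_[p] F = u * F) (hG : derivative ℚ_[p] G = u * G)
    (h0 : constantCoeff (R := ℚ_[p]) F = constantCoeff (R := ℚ_[p]) G) : F = G := by
  ext n
  induction n using Nat.strong_induction_on with
  | _ n ih =>
    match n with
    | 0 => simpa [PowerSeries.coeff_zero_eq_constantCoeff] using h0
    | n + 1 =>
      have hF' := congrArg (PowerSeries.coeff (R := ℚ_[p]) n) hF
      have hG' := congrArg (PowerSeries.coeff (R := ℚ_[p]) n) hG
      rw [coeff_derivative, coeff_mul] at hF' hG'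
      have hsum : ∑ ij ∈ Finset.HasAntidiagonal.antidiagonal n,
          PowerSeries.coeff (R := ℚ_[p]) ij.1 u * PowerSeries.coeff (R := ℚ_[p]) ij.2 F
          = ∑ ij ∈ Finset.HasAntidiagonal.antidiagonal n,
          PowerSeries.coeff (R := ℚ_[p]) ij.1 u * PowerSeries.coeff (R := ℚ_[p]) ij.2 G := by
        refine Finset.sum_congr rfl fun ij hij => ?_
        rw [Finset.HasAntidiagonal.mem_antidiagonal] at hij
        rw [ih ij.2 (by omega)]
      have key := hF'.trans (hsum.trans hG'.symm)
      have hne : ((n : ℚ_[p]) + 1) ≠ 0 := by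
        exact_mod_cast (Nat.cast_ne_zero (R := ℚ_[p])).2 (Nat.succ_ne_zero n)
      exact mul_right_cancel₀ hne key


variable (p)

/-- `exp(pX)`. -/
noncomputable def ExpP : PowerSeries ℚ_[p] :=
  PowerSeries.mk fun n => (p : ℚ_[p]) ^ n / (n.factorial : ℚ_[p])

/-- `E(X^p)`. -/
noncomputable def Ep (E : PowerSeries ℚ_[p]) : PowerSeries ℚ_[p] :=
  PowerSeries.mk fun n => if p ∣ n then PowerSeries.coeff (R := ℚ_[p]) (n / p) E else 0

lemma deriv_ExpP : derivative ℚ_[p] (ExpP p) = PowerSeries.C (R := ℚ_[p]) (p : ℚ_[p]) * ExpP p := by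
  ext n
  rw [coeff_derivative, ExpP, coeff_mk, coeff_C_mul, coeff_mk]
  have h1 : ((n + 1).factorial : ℚ_[p]) = (n + 1) * (n.factorial : ℚ_[p]) := by
    rw [Nat.factorial_succ]; push_cast; ring
  have h2 : ((n.factorial : ℚ_[p])) ≠ 0 := Nat.cast_ne_zero.2 n.factorial_ne_zero
  have h3 : ((n : ℚ_[p]) + 1) ≠ 0 := by
    exact_mod_cast (Nat.cast_ne_zero (R := ℚ_[p])).2 (Nat.succ_ne_zero n)
  field_simp [h1]
  rw [h1]; ring

variable {p}

lemma deriv_Ep {E : PowerSeries ℚ_[p]}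
    (hE : derivative ℚ_[p] E = derivative ℚ_[p] (artinHasseLog p) * E) :
    derivative ℚ_[p] (Ep p E)
      = (PowerSeries.C (R := ℚ_[p]) (p : ℚ_[p]) * (AHD p - 1)) * Ep p E := by
  have hp1 : 1 < p := one_lt p
  ext n
  rw [coeff_derivative, mul_assoc, coeff_C_mul, sub_mul, one_mul, map_sub, coeff_mul]
  rw [sum_AHD p (fun j => PowerSeries.coeff (R := ℚ_[p]) j (Ep p E)) n]
  -- split off k = 0 from the sum
  rw [Finset.sum_range_succ']
  have h00 : (if p ^ 0 ≤ n + 1 then PowerSeries.coeff (R := ℚ_[p]) (n + 1 - p ^ 0) (Ep p E) else 0)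
      = PowerSeries.coeff (R := ℚ_[p]) n (Ep p E) := by
    rw [if_pos (by simp [Nat.one_le_iff_ne_zero])]
    congr 1
  rw [h00, add_sub_cancel_right]
  by_cases hd : p ∣ (n + 1)
  · obtain ⟨m, hm⟩ := hd
    have hm1 : 1 ≤ m := by
      rcases Nat.eq_zero_or_pos m with h | h
      · rw [h, mul_zero] at hm; omega
      · exact h
    have hmn : m ≤ n := by
      have h2 : 2 * m ≤ p * m := Nat.mul_le_mul_right m (by omega)
      omega
    -- LHS
    have hL : PowerSeries.coeff (R := ℚ_[p]) (n + 1) (Ep p E) = PowerSeries.coeff (R := ℚ_[p]) m E := by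
      rw [Ep, coeff_mk, if_pos ⟨m, hm⟩, hm, Nat.mul_div_cancel_left _ (by omega)]
    -- RHS summand simplification
    have hterm : ∀ k ∈ Finset.range n,
        (if p ^ (k + 1) ≤ n + 1
          then PowerSeries.coeff (R := ℚ_[p]) (n + 1 - p ^ (k + 1)) (Ep p E) else 0)
        = (if p ^ k ≤ m then PowerSeries.coeff (R := ℚ_[p]) (m - p ^ k) E else 0) := by
      intro k _
      have hps : p ^ (k + 1) = p * p ^ k := by rw [pow_succ]; ring
      by_cases hle : p ^ k ≤ m
      · have hle' : p ^ (k + 1) ≤ n + 1 := by rw [hps, hm]; exact Nat.mul_le_mul_left p hle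
        rw [if_pos hle, if_pos hle']
        have hsub : n + 1 - p ^ (k + 1) = p * (m - p ^ k) := by
          rw [hm, hps]
          generalize hq : p ^ k = q at *
          have hqm : m = q + (m - q) := by omega
          calc p * m - p * q = p * (q + (m - q)) - p * q := by rw [← hqm]
            _ = p * (m - q) := by rw [Nat.mul_add]; omega
        rw [Ep, coeff_mk, hsub, if_pos (Dvd.intro _ rfl),
          Nat.mul_div_cancel_left _ (by omega : 0 < p)]
      · have hle' : ¬ p ^ (k + 1) ≤ n + 1 := by
          rw [hps, hm]
          intro hc
          exact hle (Nat.le_of_mul_le_mul_left hc (by omega))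
        rw [if_neg hle, if_neg hle']
    rw [Finset.sum_congr rfl hterm]
    -- extend recursion at m-1 from range m to range n
    have hrec := recursion hE (m - 1)
    rw [Nat.sub_add_cancel hm1] at hrec
    have hcast : ((m - 1 : ℕ) : ℚ_[p]) + 1 = (m : ℚ_[p]) := by
      have : ((m - 1 : ℕ) : ℚ_[p]) = (m : ℚ_[p]) - 1 := by
        push_cast [Nat.cast_sub hm1]; ring
      rw [this]; ring
    rw [hcast] at hrec
    have hext : ∑ k ∈ Finset.range m,
        (if p ^ k ≤ m then PowerSeries.coeff (R := ℚ_[p]) (m - p ^ k) E else 0)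
        = ∑ k ∈ Finset.range n,
        (if p ^ k ≤ m then PowerSeries.coeff (R := ℚ_[p]) (m - p ^ k) E else 0) := by
      refine Finset.sum_subset (Finset.range_subset_range.2 (by omega)) ?_
      intro k _ hk
      rw [Finset.mem_range, not_lt] at hk
      rw [if_neg]
      intro hc
      have : k < 2 ^ k := Nat.lt_two_pow_self
      have : 2 ^ k ≤ p ^ k := Nat.pow_le_pow_left (by omega) k
      omega
    rw [← hext, ← hrec, hL]
    have hcn : ((n : ℚ_[p]) + 1) = (p : ℚ_[p]) * (m : ℚ_[p]) := by
      have : ((n + 1 : ℕ) : ℚ_[p]) = ((p * m : ℕ) : ℚ_[p]) := by rw [hm]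
      push_cast at this
      exact this
    rw [hcn]
    ring
  · -- p does not divide n + 1 : both sides vanish
    have hL : PowerSeries.coeff (R := ℚ_[p]) (n + 1) (Ep p E) = 0 := by
      rw [Ep, coeff_mk, if_neg hd]
    rw [hL, zero_mul]
    have : ∀ k ∈ Finset.range n,
        (if p ^ (k + 1) ≤ n + 1
          then PowerSeries.coeff (R := ℚ_[p]) (n + 1 - p ^ (k + 1)) (Ep p E) else 0) = 0 := by
      intro k _
      by_cases hle : p ^ (k + 1) ≤ n + 1
      · rw [if_pos hle, Ep, coeff_mk, if_neg]
        intro hc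
        apply hd
        have hdp : p ∣ p ^ (k + 1) := dvd_pow_self p (Nat.succ_ne_zero k)
        have := Nat.dvd_add hc hdp
        rwa [Nat.sub_add_cancel hle] at this
      · rw [if_neg hle]
    rw [Finset.sum_congr rfl this, Finset.sum_const_zero, mul_zero]


lemma funEq {E : PowerSeries ℚ_[p]} (hE0 : constantCoeff (R := ℚ_[p]) E = 1)
    (hE : derivative ℚ_[p] E = derivative ℚ_[p] (artinHasseLog p) * E) :
    E ^ p = Ep p E * ExpP p := by
  have hp1 : 1 < p := one_lt p
  apply ode_unique (u := PowerSeries.C (R := ℚ_[p]) (p : ℚ_[p]) * AHD p)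
  · rw [Derivation.leibniz_pow, hE, deriv_AH, smul_eq_mul]
    have hpow : E ^ (p - 1) * (AHD p * E) = AHD p * E ^ p := by
      rw [show AHD p * E ^ p = AHD p * (E ^ (p - 1) * E) by
        rw [← pow_succ, Nat.sub_add_cancel (by omega)]]
      ring
    rw [hpow, nsmul_eq_mul, map_natCast (PowerSeries.C (R := ℚ_[p])) p]
    push_cast
    ring
  · rw [Derivation.leibniz, smul_eq_mul, smul_eq_mul, deriv_ExpP, deriv_Ep hE]
    ring
  · rw [map_pow, hE0, one_pow, map_mul]
    have h1 : constantCoeff (R := ℚ_[p]) (Ep p E) = 1 := by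
      rw [← coeff_zero_eq_constantCoeff, Ep, coeff_mk, if_pos (dvd_zero p),
        Nat.zero_div, coeff_zero_eq_constantCoeff, hE0]
    have h2 : constantCoeff (R := ℚ_[p]) (ExpP p) = 1 := by
      rw [← coeff_zero_eq_constantCoeff, ExpP, coeff_mk]
      simp
    rw [h1, h2, one_mul]


lemma val_factorial_le {j : ℕ} (hj : 1 ≤ j) : padicValNat p (j.factorial) + 1 ≤ j := by
  have hp1 : 1 < p := one_lt p
  have h1 : (p - 1) * padicValNat p (j.factorial) = j - (p.digits j).sum :=
    sub_one_mul_padicValNat_factorial j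
  have hne : p.digits j ≠ [] := Nat.digits_ne_nil_iff_ne_zero.2 (by omega)
  have hlast : (p.digits j).getLast hne ≠ 0 := Nat.getLast_digit_ne_zero p (by omega)
  have hmem := List.getLast_mem hne
  have hsum : 1 ≤ (p.digits j).sum := by
    have := List.single_le_sum (fun (x : ℕ) _ => Nat.zero_le x) _ hmem
    omega
  have h2 : padicValNat p (j.factorial) ≤ (p - 1) * padicValNat p (j.factorial) :=
    Nat.le_mul_of_pos_left _ (by omega)
  omega

lemma norm_expP_coeff {j : ℕ} (hj : 1 ≤ j) :
    ‖(p : ℚ_[p]) ^ j / (j.factorial : ℚ_[p])‖ ≤ (p : ℝ)⁻¹ := by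
  have hp1 : 1 < p := one_lt p
  set v := padicValNat p (j.factorial) with hv
  have hvj : v + 1 ≤ j := val_factorial_le hj
  have hfd : j.factorial.factorization p = v := Nat.factorization_def _ (Fact.out : p.Prime)
  have hfac : (p ^ v * (j.factorial / p ^ v) : ℕ) = j.factorial := by
    have := Nat.ordProj_mul_ordCompl_eq_self j.factorial p
    rwa [hfd] at this
  set c := j.factorial / p ^ v with hc
  have hndvd : ¬ p ∣ c := by
    have := Nat.not_dvd_ordCompl (Fact.out : p.Prime) j.factorial_ne_zero
    rwa [hfd] at this
  have hcnorm : ‖(c : ℚ_[p])‖ = 1 := by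
    have hle : ‖((c : ℤ) : ℚ_[p])‖ ≤ 1 := Padic.norm_int_le_one _
    have hnlt : ¬ ‖((c : ℤ) : ℚ_[p])‖ < 1 := by
      rw [Padic.norm_intCast_lt_one_iff]
      exact_mod_cast hndvd
    push_cast at hle hnlt ⊢
    linarith
  have hfnorm : ‖(j.factorial : ℚ_[p])‖ = ((p : ℝ)⁻¹) ^ v := by
    rw [← hfac]
    push_cast
    rw [norm_mul, norm_pow, Padic.norm_p, hcnorm, mul_one]
  rw [norm_div, norm_pow, Padic.norm_p, hfnorm]
  have hppos : (0 : ℝ) < (p : ℝ)⁻¹ := by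
    rw [inv_pos]; exact_mod_cast (by omega : 0 < p)
  rw [div_eq_mul_inv, ← pow_sub₀ _ (ne_of_gt hppos) (by omega : v ≤ j)]
  calc ((p : ℝ)⁻¹) ^ (j - v) ≤ ((p : ℝ)⁻¹) ^ 1 := by
        apply pow_le_pow_of_le_one (le_of_lt hppos) ?_ (by omega)
        rw [inv_le_one_iff₀]
        right
        exact_mod_cast Nat.one_le_iff_ne_zero.2 (by omega)
    _ = (p : ℝ)⁻¹ := pow_one _


lemma integral {E : PowerSeries ℚ_[p]} (hE0 : constantCoeff (R := ℚ_[p]) E = 1)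
    (hE : derivative ℚ_[p] E = derivative ℚ_[p] (artinHasseLog p) * E) (n : ℕ) :
    ‖PowerSeries.coeff (R := ℚ_[p]) n E‖ ≤ 1 := by
  have hp1 : 1 < p := one_lt p
  induction n using Nat.strong_induction_on with
  | _ M ih =>
    match M, ih with
    | 0, _ => rw [coeff_zero_eq_constantCoeff, hE0, norm_one]
    | (n + 1), ih =>
      set N := n + 1 with hN
      have hN1 : 1 ≤ N := by omega
      -- integral lifts of the first N coefficients
      set eZ : ℕ → ℤ_[p] := fun k =>
        if h : ‖PowerSeries.coeff (R := ℚ_[p]) k E‖ ≤ 1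
        then (⟨PowerSeries.coeff (R := ℚ_[p]) k E, h⟩ : ℤ_[p]) else 0 with heZ
      have hcast : ∀ k, k < N → ((eZ k : ℚ_[p])) = PowerSeries.coeff (R := ℚ_[p]) k E := by
        intro k hk
        rw [heZ]
        simp only
        simp [ih k hk]
      set T : Polynomial ℤ_[p] := ∑ k ∈ Finset.range N, Polynomial.C (eZ k) * Polynomial.X ^ k
        with hT
      set TQ : Polynomial ℚ_[p] := T.map (PadicInt.Coe.ringHom) with hTQ
      have hTcoeff : ∀ k, T.coeff k = if k < N then eZ k else 0 := by
        intro k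
        rw [hT, Polynomial.finset_sum_coeff]
        simp [Polynomial.coeff_C_mul, Polynomial.coeff_X_pow, Finset.sum_ite_eq,
          Finset.mem_range]
      have hTQcoeff : ∀ k, TQ.coeff k = if k < N then PowerSeries.coeff (R := ℚ_[p]) k E else 0 := by
        intro k
        rw [hTQ, Polynomial.coeff_map, hTcoeff k]
        split_ifs with h
        · exact hcast k h
        · simp
      set Tps : PowerSeries ℚ_[p] := (TQ : PowerSeries ℚ_[p]) with hTps
      have hTpsCoeff : ∀ k,
          PowerSeries.coeff (R := ℚ_[p]) k Tps = if k < N then PowerSeries.coeff (R := ℚ_[p]) k E else 0 := by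
        intro k
        rw [hTps, Polynomial.coeff_coe, hTQcoeff]
      set S : PowerSeries ℚ_[p] := E - Tps with hS
      have hSlow : ∀ k, k < N → PowerSeries.coeff (R := ℚ_[p]) k S = 0 := by
        intro k hk
        rw [hS, map_sub, hTpsCoeff, if_pos hk, sub_self]
      have hSN : PowerSeries.coeff (R := ℚ_[p]) N S = PowerSeries.coeff (R := ℚ_[p]) N E := by
        rw [hS, map_sub, hTpsCoeff, if_neg (lt_irrefl N), sub_zero]
      have hXdvd : (PowerSeries.X : PowerSeries ℚ_[p]) ^ N ∣ S :=
        PowerSeries.X_pow_dvd_iff.2 (fun m hm => hSlow m hm)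
      obtain ⟨q, hq⟩ : ∃ q, p = q + 1 := ⟨p - 1, by omega⟩
      have hsplit : E = Tps + S := by rw [hS]; ring
      -- binomial expansion of coeff N (E ^ p)
      have hconst : constantCoeff (R := ℚ_[p]) Tps = 1 := by
        rw [← coeff_zero_eq_constantCoeff, hTpsCoeff, if_pos (by omega),
          coeff_zero_eq_constantCoeff, hE0]
      have hbin : PowerSeries.coeff (R := ℚ_[p]) N (E ^ p)
          = PowerSeries.coeff (R := ℚ_[p]) N (Tps ^ p)
            + (p : ℚ_[p]) * PowerSeries.coeff (R := ℚ_[p]) N E := by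
        have h1 : E ^ p
            = ∑ k ∈ Finset.range (p + 1), Tps ^ k * S ^ (p - k) * ((p.choose k : ℕ) : ℚ_[p]⟦X⟧) := by
          rw [hsplit, add_pow]
        rw [h1, map_sum, show p + 1 = q + 1 + 1 from by omega, Finset.sum_range_succ,
          Finset.sum_range_succ]
        have hzero : ∀ k ∈ Finset.range q,
            PowerSeries.coeff (R := ℚ_[p]) N (Tps ^ k * S ^ (p - k) * ((p.choose k : ℕ) : ℚ_[p]⟦X⟧))
              = 0 := by
          intro k hk
          rw [Finset.mem_range] at hk
          have h2 : 2 ≤ p - k := by omega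
          have hd1 : (PowerSeries.X : ℚ_[p]⟦X⟧) ^ (N * (p - k)) ∣ S ^ (p - k) := by
            rw [pow_mul]
            exact pow_dvd_pow_of_dvd hXdvd _
          have hle : N + 1 ≤ N * (p - k) := by nlinarith
          have hd2 : (PowerSeries.X : ℚ_[p]⟦X⟧) ^ (N + 1)
              ∣ Tps ^ k * S ^ (p - k) * ((p.choose k : ℕ) : ℚ_[p]⟦X⟧) := by
            have : (PowerSeries.X : ℚ_[p]⟦X⟧) ^ (N + 1) ∣ S ^ (p - k) :=
              dvd_trans (pow_dvd_pow _ hle) hd1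
            exact dvd_mul_of_dvd_left (dvd_mul_of_dvd_right this _) _
          exact PowerSeries.X_pow_dvd_iff.1 hd2 N (by omega)
        rw [Finset.sum_congr rfl hzero, Finset.sum_const_zero, zero_add]
        -- middle term
        have hmid : PowerSeries.coeff (R := ℚ_[p]) N (Tps ^ q * S ^ (p - q) * ((p.choose q : ℕ) : ℚ_[p]⟦X⟧))
            = (p : ℚ_[p]) * PowerSeries.coeff (R := ℚ_[p]) N E := by
          have hpq : p - q = 1 := by omega
          have hcq : p.choose q = p := by rw [hq, Nat.choose_succ_self_right]
          rw [hpq, pow_one, hcq, ← map_natCast (PowerSeries.C (R := ℚ_[p])) p, coeff_mul_C, mul_comm]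
          congr 1
          rw [mul_comm (Tps ^ q) S, coeff_mul]
          have hmem : ((N, 0) : ℕ × ℕ) ∈ Finset.HasAntidiagonal.antidiagonal N := by
            rw [Finset.HasAntidiagonal.mem_antidiagonal]; omega
          rw [Finset.sum_eq_single_of_mem _ hmem]
          · rw [hSN, coeff_zero_eq_constantCoeff, map_pow, hconst, one_pow, mul_one]
          · intro ij hij hne
            rw [Finset.HasAntidiagonal.mem_antidiagonal] at hij
            have : ij.1 < N := by
              rcases Nat.lt_or_ge ij.1 N with h | h
              · exact h
              · exfalso; apply hne; have h1 : ij.1 = N := by omega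
                have h2 : ij.2 = 0 := by omega
                exact Prod.ext h1 h2
            rw [hSlow _ this, zero_mul]
        -- last term
        have hlast : PowerSeries.coeff (R := ℚ_[p]) N
            (Tps ^ (q + 1) * S ^ (p - (q + 1)) * ((p.choose (q + 1) : ℕ) : ℚ_[p]⟦X⟧))
            = PowerSeries.coeff (R := ℚ_[p]) N (Tps ^ p) := by
          have h1 : p - (q + 1) = 0 := by omega
          have h2 : p.choose (q + 1) = 1 := by rw [hq, Nat.choose_self]
          rw [h1, pow_zero, mul_one, h2, Nat.cast_one, mul_one, ← hq]
        rw [hmid, hlast]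
        ring
      -- coefficient of Tps ^ p comes from ℤ_p
      have hTp : PowerSeries.coeff (R := ℚ_[p]) N (Tps ^ p) = (((T ^ p).coeff N : ℤ_[p]) : ℚ_[p]) := by
        rw [hTps, ← Polynomial.coe_pow, Polynomial.coeff_coe, hTQ, ← Polynomial.map_pow,
          Polynomial.coeff_map]
        rfl
      -- the mod p congruence via Frobenius
      have hNpN : N / p < N := Nat.div_lt_self (by omega) hp1
      set φ : ℤ_[p] →+* ZMod p := PadicInt.toZMod with hφ
      have hfrob : (T.map φ) ^ p = Polynomial.expand (ZMod p) p (T.map φ) := by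
        have h := Polynomial.map_frobenius_expand p (T.map φ)
        rw [ZMod.frobenius_zmod, Polynomial.map_id] at h
        exact h.symm
      set AZ : ℤ_[p] := (T ^ p).coeff N - (if p ∣ N then eZ (N / p) else 0) with hAZ
      have hφA : φ AZ = 0 := by
        rw [hAZ, map_sub]
        have h1 : φ ((T ^ p).coeff N) = ((T.map φ) ^ p).coeff N := by
          rw [← Polynomial.map_pow, Polynomial.coeff_map]
        rw [h1, hfrob, Polynomial.coeff_expand (by omega : 0 < p)]
        by_cases hd : p ∣ N
        · rw [if_pos hd, if_pos hd, Polynomial.coeff_map, hTcoeff, if_pos hNpN, sub_self]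
        · rw [if_neg hd, if_neg hd, map_zero, sub_zero]
      have hAnorm : ‖AZ‖ ≤ (p : ℝ)⁻¹ := by
        have hker : AZ ∈ RingHom.ker φ := hφA
        rw [hφ, PadicInt.ker_toZMod, PadicInt.maximalIdeal_eq_span_p,
          Ideal.mem_span_singleton] at hker
        obtain ⟨B, hB⟩ := hker
        rw [hB, norm_mul, PadicInt.norm_p]
        calc (p : ℝ)⁻¹ * ‖B‖ ≤ (p : ℝ)⁻¹ * 1 := by
              apply mul_le_mul_of_nonneg_left (PadicInt.norm_le_one B)
              positivity
          _ = (p : ℝ)⁻¹ := mul_one _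
      -- the right-hand side estimate
      set δ : ℚ_[p] := if p ∣ N then PowerSeries.coeff (R := ℚ_[p]) (N / p) E else 0 with hδdef
      have hRHS : ‖PowerSeries.coeff (R := ℚ_[p]) N (Ep p E * ExpP p) - δ‖ ≤ (p : ℝ)⁻¹ := by
        rw [coeff_mul]
        have hmem : ((N, 0) : ℕ × ℕ) ∈ Finset.HasAntidiagonal.antidiagonal N := by
          rw [Finset.HasAntidiagonal.mem_antidiagonal]; omega
        rw [← Finset.add_sum_erase _ _ hmem]
        have hN0 : PowerSeries.coeff (R := ℚ_[p]) N (Ep p E) * PowerSeries.coeff (R := ℚ_[p]) 0 (ExpP p) = δ := by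
          rw [Ep, ExpP, coeff_mk, coeff_mk, hδdef]
          simp
        rw [hN0, add_sub_cancel_left]
        apply IsUltrametricDist.norm_sum_le_of_forall_le_of_nonneg (by positivity)
        intro ij hij
        obtain ⟨hne, hijmem⟩ := Finset.mem_erase.1 hij
        rw [Finset.HasAntidiagonal.mem_antidiagonal] at hijmem
        have hj1 : 1 ≤ ij.2 := by
          rcases Nat.eq_zero_or_pos ij.2 with h | h
          · exfalso; apply hne; exact Prod.ext (by omega) h
          · exact h
        have hi : ij.1 < N := by omega
        rw [norm_mul]
        have hEpnorm : ‖PowerSeries.coeff (R := ℚ_[p]) ij.1 (Ep p E)‖ ≤ 1 := by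
          rw [Ep, coeff_mk]
          split_ifs with h
          · exact ih _ (lt_of_le_of_lt (Nat.div_le_self _ _) hi)
          · simp
        have hExpnorm : ‖PowerSeries.coeff (R := ℚ_[p]) ij.2 (ExpP p)‖ ≤ (p : ℝ)⁻¹ := by
          rw [ExpP, coeff_mk]
          exact norm_expP_coeff hj1
        calc ‖PowerSeries.coeff (R := ℚ_[p]) ij.1 (Ep p E)‖ * ‖PowerSeries.coeff (R := ℚ_[p]) ij.2 (ExpP p)‖
            ≤ 1 * (p : ℝ)⁻¹ := mul_le_mul hEpnorm hExpnorm (norm_nonneg _) zero_le_one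
          _ = (p : ℝ)⁻¹ := one_mul _
      -- assemble
      have hδ : ((if p ∣ N then eZ (N / p) else 0 : ℤ_[p]) : ℚ_[p]) = δ := by
        rw [hδdef]
        split_ifs with h
        · exact hcast _ hNpN
        · simp
      have hkey : (p : ℚ_[p]) * PowerSeries.coeff (R := ℚ_[p]) N E
          = (PowerSeries.coeff (R := ℚ_[p]) N (Ep p E * ExpP p) - δ) - ((AZ : ℚ_[p])) := by
        have hAZQ : ((AZ : ℚ_[p])) = PowerSeries.coeff (R := ℚ_[p]) N (Tps ^ p) - δ := by
          rw [hAZ]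
          push_cast
          rw [hδ, hTp]
        rw [hAZQ, ← funEq hE0 hE, hbin]
        ring
      have hfin : ‖(p : ℚ_[p]) * PowerSeries.coeff (R := ℚ_[p]) N E‖ ≤ (p : ℝ)⁻¹ := by
        rw [hkey, sub_eq_add_neg]
        refine le_trans (IsUltrametricDist.norm_add_le_max _ _) (max_le hRHS ?_)
        rw [norm_neg, ← PadicInt.norm_def]
        exact hAnorm
      rw [norm_mul, Padic.norm_p] at hfin
      have hppos : (0 : ℝ) < (p : ℝ)⁻¹ := by
        rw [inv_pos]; exact_mod_cast (by omega : 0 < p)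
      have hmul : (p : ℝ)⁻¹ * ‖PowerSeries.coeff (R := ℚ_[p]) N E‖ ≤ (p : ℝ)⁻¹ * 1 := by
        rwa [mul_one]
      exact le_of_mul_le_mul_left hmul hppos


lemma coeff_low {E : PowerSeries ℚ_[p]} (hE0 : constantCoeff (R := ℚ_[p]) E = 1)
    (hE : derivative ℚ_[p] E = derivative ℚ_[p] (artinHasseLog p) * E) {n : ℕ}
    (hn : n ≤ p - 1) :
    PowerSeries.coeff (R := ℚ_[p]) n E = ((n.factorial : ℚ_[p]))⁻¹ := by
  have hp1 : 1 < p := one_lt p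
  induction n with
  | zero => simpa [coeff_zero_eq_constantCoeff] using hE0
  | succ m ihm =>
    have hm : m ≤ p - 1 := by omega
    have hrec := recursion hE m
    have hsum : (∑ k ∈ Finset.range (m + 1),
        if p ^ k ≤ m + 1 then PowerSeries.coeff (R := ℚ_[p]) (m + 1 - p ^ k) E else 0)
        = PowerSeries.coeff (R := ℚ_[p]) m E := by
      rw [Finset.sum_eq_single_of_mem 0 (Finset.mem_range.2 (by omega))]
      · simp
      · intro k _ hkne
        rw [if_neg]
        have h2 : p ≤ p ^ k := Nat.le_self_pow hkne p
        omega
    rw [hsum, ihm hm] at hrec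
    have hfac : (((m + 1).factorial : ℕ) : ℚ_[p]) = ((m : ℚ_[p]) + 1) * (m.factorial : ℚ_[p]) := by
      rw [Nat.factorial_succ]; push_cast; ring
    have h1 : ((m : ℚ_[p]) + 1) ≠ 0 := by
      exact_mod_cast (Nat.cast_ne_zero (R := ℚ_[p])).2 (Nat.succ_ne_zero m)
    have h2 : (m.factorial : ℚ_[p]) ≠ 0 := Nat.cast_ne_zero.2 m.factorial_ne_zero
    rw [hfac, mul_inv]
    rw [← hrec]
    field_simp

end Stmt9Aux

open Stmt9Aux

/-- Let `E = exp(AH)` be the Artin–Hasse exponential and `π_l` a root of `AH`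
of valuation `1/(p^l - p^{l-1})`; write `θ_l(X) = E(π_l X) = ∑ λ_{n,l} X^n`,
so `λ_{n,l} = e_n π_l^n`. Then `v_p(λ_{n,l}) ≥ n/(p^l - p^{l-1})` for all `n`,
`λ_{n,l} = π_l^n/n!` for `0 ≤ n ≤ p-1`, and `θ_l` converges on the open disk
of radius `p^{1/(p^l - p^{l-1})}`. -/
theorem stmt_9 (p : ℕ) [Fact p.Prime] (l : ℕ) (hl : 1 ≤ l)
    {K : Type*} [NormedField K] [Algebra ℚ_[p] K] [IsAlgClosed K] [CompleteSpace K]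
    [IsUltrametricDist K]
    (hiso : ∀ x : ℚ_[p], ‖algebraMap ℚ_[p] K x‖ = ‖x‖)
    (E : PowerSeries ℚ_[p]) (hE0 : PowerSeries.constantCoeff (R := ℚ_[p]) E = 1)
    (hE : PowerSeries.derivative ℚ_[p] E
        = PowerSeries.derivative ℚ_[p] (artinHasseLog p) * E)
    (π : K) (hroot : HasSum (fun i : ℕ => π ^ p ^ i / (p : K) ^ i) 0)
    (hval : ‖π‖ = (p : ℝ) ^ (-(1 / ((p : ℝ) ^ l - (p : ℝ) ^ (l - 1)))))
    (lam : ℕ → K) (hlam : ∀ n, lam n = algebraMap ℚ_[p] K (PowerSeries.coeff (R := ℚ_[p]) n E) * π ^ n) :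
    (∀ n : ℕ, ‖lam n‖ ≤ (p : ℝ) ^ (-((n : ℝ) / ((p : ℝ) ^ l - (p : ℝ) ^ (l - 1))))) ∧
      (∀ n : ℕ, n ≤ p - 1 → lam n = π ^ n / (n.factorial : K)) ∧
      ∀ x : K, ‖x‖ < (p : ℝ) ^ (1 / ((p : ℝ) ^ l - (p : ℝ) ^ (l - 1))) →
        Summable (fun n : ℕ => lam n * x ^ n) := by
  have hp1 : 1 < p := (Fact.out : p.Prime).one_lt
  have hpR : (1 : ℝ) < (p : ℝ) := by exact_mod_cast hp1
  set c : ℝ := (p : ℝ) ^ l - (p : ℝ) ^ (l - 1) with hc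
  have hcpos : 0 < c := by
    have h := pow_lt_pow_right₀ hpR (by omega : l - 1 < l)
    rw [hc]; linarith
  have hpow : ∀ n : ℕ, ((p : ℝ) ^ (-(1 / c))) ^ n = (p : ℝ) ^ (-((n : ℝ) / c)) := by
    intro n
    rw [← Real.rpow_natCast ((p : ℝ) ^ (-(1 / c))) n, ← Real.rpow_mul (by positivity)]
    congr 1
    ring
  have hnorm : ∀ n : ℕ, ‖lam n‖ ≤ (p : ℝ) ^ (-((n : ℝ) / c)) := by
    intro n
    rw [hlam, norm_mul, hiso, norm_pow, hval, hpow]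
    calc ‖PowerSeries.coeff (R := ℚ_[p]) n E‖ * ((p : ℝ) ^ (-((n : ℝ) / c)))
        ≤ 1 * ((p : ℝ) ^ (-((n : ℝ) / c))) := by
          apply mul_le_mul_of_nonneg_right (integral hE0 hE n)
          positivity
      _ = (p : ℝ) ^ (-((n : ℝ) / c)) := one_mul _
  refine ⟨hnorm, ?_, ?_⟩
  · intro n hn
    rw [hlam, coeff_low hE0 hE hn, map_inv₀, map_natCast, div_eq_mul_inv, mul_comm]
  · intro x hx
    set r : ℝ := (p : ℝ) ^ (-(1 / c)) * ‖x‖ with hr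
    have hrpos : 0 ≤ r := by positivity
    have hr1 : r < 1 := by
      have hpos : (0 : ℝ) < (p : ℝ) ^ (-(1 / c)) := by positivity
      have hlt := mul_lt_mul_of_pos_left hx hpos
      have hmul : (p : ℝ) ^ (-(1 / c)) * (p : ℝ) ^ (1 / c) = 1 := by
        rw [← Real.rpow_add (by positivity)]
        norm_num
      rw [hr]
      linarith
    apply Summable.of_norm_bounded (g := fun n => r ^ n)
      (summable_geometric_of_lt_one hrpos hr1)
    intro n
    rw [norm_mul, norm_pow, hr, mul_pow, hpow]
    calc ‖lam n‖ * ‖x‖ ^ n ≤ (p : ℝ) ^ (-((n : ℝ) / c)) * ‖x‖ ^ n := by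
          apply mul_le_mul_of_nonneg_right (hnorm n)
          positivity
      _ = _ := rfl
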